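/- Let Φ be a DSE of multiplicity n with support H = ⋃_i graph(φ_i) ⊆ E. Let A, B ⊆ X and let θ : C → D be a piece (a partial isomorphism with graph ⊆ H) with A ∩ C = ∅ and B ∩ D = ∅. Then there exists a piece θ_1 : S → T with S ⊆ A, T ⊆ (B ∪ D)^c and μ(S) ≥ (μ(A) − μ(B))/2 − ((n−1)/(2n))·μ(C). -/

import Mathlib

open MeasureTheory
open scoped ENNReal

section GreedyAux
variable {X : Type*}

/-- The maximal candidate extension set at stage `k`, given accumulated domain `S`
and image `T`. -/
def nextP (A B D : Set X) (Ad : ℕ → Set X) (f : ℕ → X → X) (S T : Set X) (k : ℕ) : Set X :=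
  ((A \ S) ∩ Ad k) ∩ f k ⁻¹' (B ∪ D ∪ T)ᶜ

/-- Accumulated (domain, image) pairs of the greedy construction. -/
def STfun (A B D : Set X) (Ad : ℕ → Set X) (f : ℕ → X → X) : ℕ → Set X × Set X
  | 0 => (∅, ∅)
  | (k+1) =>
      let p := STfun A B D Ad f k
      let P := nextP A B D Ad f p.1 p.2 k
      (p.1 ∪ P, p.2 ∪ f k '' P)

/-- The piece added at stage `k`. -/
def Pset (A B D : Set X) (Ad : ℕ → Set X) (f : ℕ → X → X) (k : ℕ) : Set X :=
  nextP A B D Ad f (STfun A B D Ad f k).1 (STfun A B D Ad f k).2 k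

open scoped Classical in
/-- The map assembled from the stages. -/
noncomputable def gfun (A B D : Set X) (Ad : ℕ → Set X) (f : ℕ → X → X) : ℕ → X → X
  | 0 => id
  | (k+1) => (Pset A B D Ad f k).piecewise (f k) (gfun A B D Ad f k)

variable (A B D : Set X) (Ad : ℕ → Set X) (f : ℕ → X → X)

lemma STfun_succ_fst (k : ℕ) :
    (STfun A B D Ad f (k+1)).1 = (STfun A B D Ad f k).1 ∪ Pset A B D Ad f k := rfl

lemma STfun_succ_snd (k : ℕ) :
    (STfun A B D Ad f (k+1)).2 = (STfun A B D Ad f k).2 ∪ f k '' Pset A B D Ad f k := rfl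

lemma STfun_fst_mono : Monotone fun k => (STfun A B D Ad f k).1 := by
  apply monotone_nat_of_le_succ
  intro k
  rw [STfun_succ_fst]
  exact Set.subset_union_left

lemma STfun_snd_mono : Monotone fun k => (STfun A B D Ad f k).2 := by
  apply monotone_nat_of_le_succ
  intro k
  rw [STfun_succ_snd]
  exact Set.subset_union_left

lemma Pset_subset_diff (k : ℕ) : Pset A B D Ad f k ⊆ A \ (STfun A B D Ad f k).1 :=
  fun _ hx => hx.1.1

lemma Pset_subset_Ad (k : ℕ) : Pset A B D Ad f k ⊆ Ad k :=
  fun _ hx => hx.1.2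

lemma image_Pset_subset (k : ℕ) :
    f k '' Pset A B D Ad f k ⊆ (B ∪ D ∪ (STfun A B D Ad f k).2)ᶜ := by
  rintro y ⟨x, hx, rfl⟩
  exact hx.2

lemma Pset_subset_S_succ (k : ℕ) : Pset A B D Ad f k ⊆ (STfun A B D Ad f (k+1)).1 := by
  rw [STfun_succ_fst]; exact Set.subset_union_right

lemma image_Pset_subset_T_succ (k : ℕ) :
    f k '' Pset A B D Ad f k ⊆ (STfun A B D Ad f (k+1)).2 := by
  rw [STfun_succ_snd]; exact Set.subset_union_right

lemma Pset_subset_S_of_lt {j k : ℕ} (h : j < k) :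
    Pset A B D Ad f j ⊆ (STfun A B D Ad f k).1 :=
  (Pset_subset_S_succ A B D Ad f j).trans (STfun_fst_mono A B D Ad f h)

lemma image_Pset_subset_T_of_lt {j k : ℕ} (h : j < k) :
    f j '' Pset A B D Ad f j ⊆ (STfun A B D Ad f k).2 :=
  (image_Pset_subset_T_succ A B D Ad f j).trans (STfun_snd_mono A B D Ad f h)

lemma Pset_disjoint {j k : ℕ} (h : j < k) :
    Disjoint (Pset A B D Ad f j) (Pset A B D Ad f k) := by
  apply Set.disjoint_left.mpr
  intro x hxj hxk
  exact (Pset_subset_diff A B D Ad f k hxk).2 (Pset_subset_S_of_lt A B D Ad f h hxj)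

lemma image_Pset_disjoint {j k : ℕ} (h : j < k) :
    Disjoint (f j '' Pset A B D Ad f j) (f k '' Pset A B D Ad f k) := by
  apply Set.disjoint_left.mpr
  intro y hyj hyk
  have h1 := image_Pset_subset_T_of_lt A B D Ad f h hyj
  have h2 := image_Pset_subset A B D Ad f k hyk
  exact h2 (Or.inr h1)

lemma Pset_pairwise_disjoint {j k : ℕ} (h : j ≠ k) :
    Disjoint (Pset A B D Ad f j) (Pset A B D Ad f k) := by
  rcases h.lt_or_gt with h | h
  · exact Pset_disjoint A B D Ad f h
  · exact (Pset_disjoint A B D Ad f h).symm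

lemma image_Pset_pairwise_disjoint {j k : ℕ} (h : j ≠ k) :
    Disjoint (f j '' Pset A B D Ad f j) (f k '' Pset A B D Ad f k) := by
  rcases h.lt_or_gt with h | h
  · exact image_Pset_disjoint A B D Ad f h
  · exact (image_Pset_disjoint A B D Ad f h).symm

/-- Maximality: at stage `k > i` no further extension using index `i` is possible. -/
lemma maximal {i k : ℕ} (h : i < k) :
    ((A \ (STfun A B D Ad f k).1) ∩ Ad i) ∩ f i ⁻¹' (B ∪ D ∪ (STfun A B D Ad f k).2)ᶜ = ∅ := by
  ext x
  simp only [Set.mem_empty_iff_false, iff_false]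
  rintro ⟨⟨⟨hxA, hxS⟩, hxAd⟩, hxpre⟩
  apply hxS
  apply Pset_subset_S_of_lt A B D Ad f h
  refine ⟨⟨⟨hxA, fun hc => hxS (STfun_fst_mono A B D Ad f h.le hc)⟩, hxAd⟩, ?_⟩
  intro hc
  apply hxpre
  rcases hc with hc | hc
  · exact Or.inl hc
  · exact Or.inr (STfun_snd_mono A B D Ad f h.le hc)

lemma STfun_fst_eq (k : ℕ) :
    (STfun A B D Ad f k).1 = ⋃ j ∈ Finset.range k, Pset A B D Ad f j := by
  induction k with
  | zero => simp [STfun]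
  | succ k ih =>
      rw [STfun_succ_fst, ih, Finset.range_add_one]
      simp [Set.union_comm]

lemma STfun_snd_eq (k : ℕ) :
    (STfun A B D Ad f k).2 = ⋃ j ∈ Finset.range k, f j '' Pset A B D Ad f j := by
  induction k with
  | zero => simp [STfun]
  | succ k ih =>
      rw [STfun_succ_snd, ih, Finset.range_add_one]
      simp [Set.union_comm]

open scoped Classical in
lemma gfun_eq {j k : ℕ} (h : j < k) {x : X} (hx : x ∈ Pset A B D Ad f j) :
    gfun A B D Ad f k x = f j x := by
  induction k with
  | zero => omega
  | succ k ih =>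
      rcases Nat.lt_succ_iff_lt_or_eq.mp h with h | rfl
      · have hxk : x ∉ Pset A B D Ad f k :=
          fun hc => (Pset_disjoint A B D Ad f h).le_bot ⟨hx, hc⟩
        rw [gfun, Set.piecewise_eq_of_notMem _ _ _ hxk]
        exact ih h
      · rw [gfun, Set.piecewise_eq_of_mem _ _ _ hx]

open scoped Classical in
lemma gfun_measurable [MeasurableSpace X] (hf : ∀ j, Measurable (f j))
    (hP : ∀ j, MeasurableSet (Pset A B D Ad f j)) (k : ℕ) :
    Measurable (gfun A B D Ad f k) := by
  induction k with
  | zero => exact measurable_id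
  | succ k ih => exact Measurable.piecewise (hP k) (hf k) ih

end GreedyAux

lemma endgame_ineq (n : ℕ) (hn : 1 ≤ n) (a b c s : ℝ≥0∞)
    (h : (n:ℝ≥0∞) * a ≤ ((n:ℝ≥0∞) - 1) * c + (n:ℝ≥0∞) * b + 2 * (n:ℝ≥0∞) * s) :
    (a - b) / 2 - (((n : ℝ≥0∞) - 1) / (2 * n)) * c ≤ s := by
  set N : ℝ≥0∞ := (n : ℝ≥0∞) with hN
  have hN0 : N ≠ 0 := by
    simp only [hN, ne_eq, Nat.cast_eq_zero]
    omega
  have hNt : N ≠ ∞ := by simp [hN]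
  have h2 : (2:ℝ≥0∞) ≠ 0 := two_ne_zero
  have h2t : (2:ℝ≥0∞) ≠ ∞ := by simp
  have h2N0 : 2 * N ≠ 0 := mul_ne_zero h2 hN0
  have h2Nt : 2 * N ≠ ∞ := ENNReal.mul_ne_top h2t hNt
  rw [tsub_le_iff_right]
  rw [← ENNReal.mul_le_mul_iff_right h2N0 h2Nt]
  have e1 : (2*N) * ((a-b)/2) = N * a - N * b := by
    rw [div_eq_mul_inv, show (2*N)*((a-b)*2⁻¹) = (2*2⁻¹)*(N*(a-b)) from by ring,
      ENNReal.mul_inv_cancel h2 h2t, one_mul, ENNReal.mul_sub (fun _ _ => hNt)]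
  have e2 : (2*N) * (s + ((N-1)/(2*N))*c) = 2*N*s + (N-1)*c := by
    rw [mul_add]
    congr 1
    rw [show (2*N)*(((N-1)/(2*N))*c) = ((2*N) * ((N-1)/(2*N)))*c from by ring,
      ENNReal.mul_div_cancel' (fun h => absurd h h2N0) (fun h => absurd h h2Nt)]
  rw [e1, e2, tsub_le_iff_right]
  calc N*a ≤ (N-1)*c + N*b + 2*N*s := h
    _ = 2*N*s + (N-1)*c + N*b := by ring

lemma keycount {X : Type*} [MeasurableSpace X] (μ : Measure X) (m n : ℕ)
    (G : Fin m → Set X) (hG : ∀ i, MeasurableSet (G i))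
    (hae : ∀ᵐ y ∂μ, ∑ i : Fin m, (G i).indicator (fun _ => (1:ℝ≥0∞)) y = (n : ℝ≥0∞))
    (W : Set X) (hW : MeasurableSet W) :
    ∑ i : Fin m, μ (G i ∩ W) = n * μ W := by
  have h1 : ∀ i : Fin m, μ (G i ∩ W) =
      ∫⁻ y, (G i).indicator (fun _ => (1:ℝ≥0∞)) y ∂(μ.restrict W) := by
    intro i
    rw [lintegral_indicator (hG i), setLIntegral_one, Measure.restrict_apply (hG i)]
  rw [Finset.sum_congr rfl (fun i _ => h1 i), ← lintegral_finset_sum]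
  · rw [lintegral_congr_ae (ae_restrict_of_ae hae), lintegral_const,
      Measure.restrict_apply_univ]
  · exact fun i _ => measurable_const.indicator (hG i)


/-- A measure-preserving partial isomorphism with domain `A`, given by the restriction of
`f` to `A`, whose graph is contained in the equivalence relation `E` (an element of `[[E]]`). -/
def IsPartialIso {X : Type*} [MeasurableSpace X] (μ : Measure X) (E : Set (X × X))
    (A : Set X) (f : X → X) : Prop :=
  MeasurableSet A ∧ Measurable f ∧ Set.InjOn f A ∧ MeasurableSet (f '' A) ∧
    (∀ x ∈ A, (x, f x) ∈ E) ∧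
    ∀ s ⊆ A, MeasurableSet s → μ (f '' s) = μ s

/-- Let `Φ = {φ_i : A_i → B_i}` be a DSE of multiplicity `n` with support
`H = ⋃_i graph φ_i`. Let `A, B ⊆ X` and let `θ : C → D` be a piece (partial isomorphism
with graph in `H`) with `A ∩ C = ∅` and `B ∩ D = ∅`. Then there is a piece `θ₁ : S → T`
with `S ⊆ A`, `T ⊆ (B ∪ D)ᶜ` and `μ(S) ≥ (μ(A) − μ(B))/2 − ((n−1)/(2n))·μ(C)`. -/
theorem piece_extension_lemma
    {X : Type*} [MeasurableSpace X] [StandardBorelSpace X]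
    (μ : Measure X) [IsProbabilityMeasure μ]
    (E : Set (X × X)) (hE : Equivalence fun x y => (x, y) ∈ E)
    (hcnt : ∀ x, {y | (x, y) ∈ E}.Countable)
    (m n : ℕ) (hn : 1 ≤ n) (Adom : Fin m → Set X) (f : Fin m → X → X)
    (hiso : ∀ i, IsPartialIso μ E (Adom i) (f i))
    (hrow : ∀ᵐ x ∂μ, ∑ i : Fin m, (Adom i).indicator (fun _ => (1 : ℝ≥0∞)) x = (n : ℝ≥0∞))
    (hcol : ∀ᵐ y ∂μ, ∑ i : Fin m,
      (f i '' Adom i).indicator (fun _ => (1 : ℝ≥0∞)) y = (n : ℝ≥0∞))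
    (A B : Set X) (hA : MeasurableSet A) (hB : MeasurableSet B)
    (C : Set X) (θ : X → X)
    (hθ : IsPartialIso μ E C θ)
    (hθH : ∀ x ∈ C, ∃ i, x ∈ Adom i ∧ f i x = θ x)
    (hAC : A ∩ C = ∅) (hBD : B ∩ (θ '' C) = ∅) :
    ∃ (S : Set X) (θ₁ : X → X),
      IsPartialIso μ E S θ₁ ∧
      (∀ x ∈ S, ∃ i, x ∈ Adom i ∧ f i x = θ₁ x) ∧
      S ⊆ A ∧ (θ₁ '' S) ⊆ (B ∪ θ '' C)ᶜ ∧
      (μ A - μ B) / 2 - (((n : ℝ≥0∞) - 1) / (2 * n)) * μ C ≤ μ S := by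
  obtain ⟨hC, hθmeas, hθinj, hDmeas, hθE, hθpres⟩ := hθ
  set D : Set X := θ '' C with hDdef
  have hμD : μ D = μ C := hθpres C subset_rfl hC
  -- extend the family of partial isomorphisms to ℕ
  set Ad : ℕ → Set X := fun k => if h : k < m then Adom ⟨k, h⟩ else ∅ with hAddef
  set F : ℕ → X → X := fun k => if h : k < m then f ⟨k, h⟩ else id with hFdef
  have hAdi : ∀ i : Fin m, Ad (i : ℕ) = Adom i := by
    intro i; simp [hAddef, i.isLt]
  have hFi : ∀ i : Fin m, F (i : ℕ) = f i := by
    intro i; simp [hFdef, i.isLt]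
  have hAdm : ∀ k, MeasurableSet (Ad k) := by
    intro k
    by_cases h : k < m
    · rw [show Ad k = Adom ⟨k, h⟩ from by simp [hAddef, h]]; exact (hiso _).1
    · rw [show Ad k = ∅ from by simp [hAddef, h]]; exact MeasurableSet.empty
  have hFm : ∀ k, Measurable (F k) := by
    intro k
    by_cases h : k < m
    · rw [show F k = f ⟨k, h⟩ from by simp [hFdef, h]]; exact (hiso _).2.1
    · rw [show F k = id from by simp [hFdef, h]]; exact measurable_id
  have hFinj : ∀ k, Set.InjOn (F k) (Ad k) := by
    intro k
    by_cases h : k < m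
    · rw [show F k = f ⟨k, h⟩ from by simp [hFdef, h],
        show Ad k = Adom ⟨k, h⟩ from by simp [hAddef, h]]
      exact (hiso _).2.2.1
    · rw [show Ad k = ∅ from by simp [hAddef, h]]; exact fun x hx => absurd hx (by simp)
  have hFE : ∀ k, ∀ x ∈ Ad k, (x, F k x) ∈ E := by
    intro k x hx
    by_cases h : k < m
    · rw [show F k = f ⟨k, h⟩ from by simp [hFdef, h]]
      exact (hiso _).2.2.2.2.1 x (by rwa [show Ad k = Adom ⟨k, h⟩ from by simp [hAddef, h]] at hx)
    · exact absurd hx (by simp [hAddef, h])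
  have hFpres : ∀ k, ∀ s ⊆ Ad k, MeasurableSet s → μ (F k '' s) = μ s := by
    intro k s hs hsm
    by_cases h : k < m
    · rw [show F k = f ⟨k, h⟩ from by simp [hFdef, h]]
      exact (hiso _).2.2.2.2.2 s (by rwa [show Ad k = Adom ⟨k, h⟩ from by simp [hAddef, h]] at hs)
        hsm
    · rw [show F k = id from by simp [hFdef, h], Set.image_id]
  -- measurability of the greedy construction
  have hST : ∀ k, MeasurableSet (STfun A B D Ad F k).1 ∧ MeasurableSet (STfun A B D Ad F k).2 := by
    intro k
    induction k with
    | zero => exact ⟨MeasurableSet.empty, MeasurableSet.empty⟩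
    | succ k ih =>
        have hPk : MeasurableSet (Pset A B D Ad F k) :=
          ((hA.diff ih.1).inter (hAdm k)).inter ((hFm k) (((hB.union hDmeas).union ih.2).compl))
        exact ⟨ih.1.union hPk,
          ih.2.union (hPk.image_of_measurable_injOn (hFm k)
            ((hFinj k).mono (Pset_subset_Ad A B D Ad F k)))⟩
  have hPmeas : ∀ k, MeasurableSet (Pset A B D Ad F k) := fun k =>
    ((hA.diff (hST k).1).inter (hAdm k)).inter
      ((hFm k) (((hB.union hDmeas).union (hST k).2).compl))
  have hPim : ∀ k, MeasurableSet (F k '' Pset A B D Ad F k) := fun k =>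
    (hPmeas k).image_of_measurable_injOn (hFm k) ((hFinj k).mono (Pset_subset_Ad A B D Ad F k))
  have hPpres : ∀ k, ∀ s ⊆ Pset A B D Ad F k, MeasurableSet s → μ (F k '' s) = μ s :=
    fun k s hs hsm => hFpres k s (hs.trans (Pset_subset_Ad A B D Ad F k)) hsm
  set S : Set X := (STfun A B D Ad F m).1 with hSdef
  set T : Set X := (STfun A B D Ad F m).2 with hTdef
  set θ₁ : X → X := gfun A B D Ad F m with hθ₁def
  have hSmeas : MeasurableSet S := (hST m).1
  have hTmeas : MeasurableSet T := (hST m).2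
  have hSeq : S = ⋃ j ∈ Finset.range m, Pset A B D Ad F j := STfun_fst_eq A B D Ad F m
  have hTeq : T = ⋃ j ∈ Finset.range m, F j '' Pset A B D Ad F j := STfun_snd_eq A B D Ad F m
  have hSsubA : S ⊆ A := by
    rw [hSeq]
    exact Set.iUnion₂_subset fun j _ => fun x hx => (Pset_subset_diff A B D Ad F j hx).1
  have hμT : μ T = μ S := by
    rw [hSeq, hTeq, measure_biUnion_finset ?_ (fun j _ => hPim j),
      measure_biUnion_finset ?_ (fun j _ => hPmeas j)]
    · exact Finset.sum_congr rfl fun j _ =>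
        hPpres j _ subset_rfl (hPmeas j)
    · exact fun j _ k _ hjk => Pset_pairwise_disjoint A B D Ad F hjk
    · exact fun j _ k _ hjk => image_Pset_pairwise_disjoint A B D Ad F hjk
  -- properties of θ₁
  have hθ₁meas : Measurable θ₁ := gfun_measurable A B D Ad F hFm hPmeas m
  have hθ₁P : ∀ j < m, ∀ x ∈ Pset A B D Ad F j, θ₁ x = F j x := fun j hj x hx =>
    gfun_eq A B D Ad F hj hx
  have hθ₁H : ∀ x ∈ S, ∃ i : Fin m, x ∈ Adom i ∧ f i x = θ₁ x := by
    intro x hx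
    rw [hSeq] at hx
    simp only [Set.mem_iUnion, Finset.mem_range, exists_prop] at hx
    obtain ⟨j, hj, hxP⟩ := hx
    refine ⟨⟨j, hj⟩, ?_, ?_⟩
    · rw [← hAdi ⟨j, hj⟩]; exact Pset_subset_Ad A B D Ad F j hxP
    · rw [← hFi ⟨j, hj⟩, ← hθ₁P j hj x hxP]
  have hθ₁inj : Set.InjOn θ₁ S := by
    intro x hx y hy hxy
    rw [hSeq] at hx hy
    simp only [Set.mem_iUnion, Finset.mem_range, exists_prop] at hx hy
    obtain ⟨j, hj, hxP⟩ := hx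
    obtain ⟨k, hk, hyP⟩ := hy
    rw [hθ₁P j hj x hxP, hθ₁P k hk y hyP] at hxy
    rcases eq_or_ne j k with rfl | hjk
    · exact hFinj j (Pset_subset_Ad A B D Ad F j hxP) (Pset_subset_Ad A B D Ad F j hyP) hxy
    · exfalso
      exact (image_Pset_pairwise_disjoint A B D Ad F hjk).le_bot
        ⟨⟨x, hxP, rfl⟩, by rw [hxy]; exact ⟨y, hyP, rfl⟩⟩
  have himS : θ₁ '' S = T := by
    rw [hSeq, hTeq, Set.image_iUnion₂]
    exact Set.iUnion₂_congr fun j hj =>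
      Set.image_congr fun x hx => hθ₁P j (Finset.mem_range.mp hj) x hx
  have hpres : ∀ s ⊆ S, MeasurableSet s → μ (θ₁ '' s) = μ s := by
    intro s hsS hsm
    have hs_eq : s = ⋃ j ∈ Finset.range m, (s ∩ Pset A B D Ad F j) := by
      rw [← Set.inter_iUnion₂, ← hSeq, Set.inter_eq_self_of_subset_left hsS]
    have himg : θ₁ '' s = ⋃ j ∈ Finset.range m, F j '' (s ∩ Pset A B D Ad F j) := by
      conv_lhs => rw [hs_eq]
      rw [Set.image_iUnion₂]
      exact Set.iUnion₂_congr fun j hj =>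
        Set.image_congr fun x hx => hθ₁P j (Finset.mem_range.mp hj) x hx.2
    have hmPj : ∀ j, MeasurableSet (s ∩ Pset A B D Ad F j) := fun j => hsm.inter (hPmeas j)
    have hmFj : ∀ j, MeasurableSet (F j '' (s ∩ Pset A B D Ad F j)) := fun j =>
      (hmPj j).image_of_measurable_injOn (hFm j)
        ((hFinj j).mono (Set.inter_subset_right.trans (Pset_subset_Ad A B D Ad F j)))
    rw [himg, measure_biUnion_finset ?_ (fun j _ => hmFj j)]
    · rw [Finset.sum_congr rfl (fun j _ => hPpres j _ Set.inter_subset_right (hmPj j)),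
        ← measure_biUnion_finset ?_ (fun j _ => hmPj j), ← hs_eq]
      exact fun j _ k _ hjk =>
        (Pset_pairwise_disjoint A B D Ad F hjk).mono Set.inter_subset_right
          Set.inter_subset_right
    · exact fun j _ k _ hjk =>
        (image_Pset_pairwise_disjoint A B D Ad F hjk).mono
          (Set.image_mono Set.inter_subset_right)
          (Set.image_mono Set.inter_subset_right)
  have hgraph : ∀ x ∈ S, (x, θ₁ x) ∈ E := by
    intro x hx
    obtain ⟨i, hxi, hfi⟩ := hθ₁H x hx
    rw [← hfi]
    exact (hiso i).2.2.2.2.1 x hxi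
  have hTsub : θ₁ '' S ⊆ (B ∪ D)ᶜ := by
    rw [himS, hTeq]
    refine Set.iUnion₂_subset fun j _ => ?_
    intro y hy hyBD
    exact image_Pset_subset A B D Ad F j hy (Or.inl hyBD)
  -- the counting estimate
  have hE0m : MeasurableSet (A \ S) := hA.diff hSmeas
  have hbase_sub : ∀ i : Fin m, (A \ S) ∩ Adom i ⊆ f i ⁻¹' (B ∪ D ∪ T) := by
    intro i x hx
    by_contra hnot
    have hempty := maximal A B D Ad F (i.isLt)
    rw [← hSdef, ← hTdef] at hempty
    have : x ∈ ((A \ S) ∩ Ad (i : ℕ)) ∩ F (i : ℕ) ⁻¹' (B ∪ D ∪ T)ᶜ := by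
      refine ⟨⟨hx.1, by rw [hAdi]; exact hx.2⟩, ?_⟩
      rw [Set.mem_preimage, hFi]
      exact hnot
    rw [hempty] at this
    exact this
  set U : Fin m → Set X := fun i => ((A \ S) ∩ Adom i) ∩ f i ⁻¹' D with hUdef
  set V : Fin m → Set X := fun i => ((A \ S) ∩ Adom i) ∩ f i ⁻¹' (B ∪ T) with hVdef
  have hUm : ∀ i, MeasurableSet (U i) := fun i =>
    (hE0m.inter (hiso i).1).inter ((hiso i).2.1 hDmeas)
  have hVm : ∀ i, MeasurableSet (V i) := fun i =>
    (hE0m.inter (hiso i).1).inter ((hiso i).2.1 (hB.union hTmeas))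
  have hUim : ∀ i, MeasurableSet (f i '' U i) := fun i =>
    (hUm i).image_of_measurable_injOn (hiso i).2.1
      ((hiso i).2.2.1.mono (Set.inter_subset_left.trans Set.inter_subset_right))
  have hcover : ∀ i : Fin m, (A \ S) ∩ Adom i ⊆ U i ∪ V i := by
    intro i x hx
    rcases hbase_sub i hx with hc | hc
    · rcases hc with hc | hc
      · exact Or.inr ⟨hx, Or.inl hc⟩
      · exact Or.inl ⟨hx, hc⟩
    · exact Or.inr ⟨hx, Or.inr hc⟩
  have hmain : ∀ i : Fin m, μ (Adom i ∩ (A \ S)) ≤ μ (f i '' U i) + μ (f i '' V i) := by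
    intro i
    have h1 : μ (Adom i ∩ (A \ S)) = μ (f i '' ((A \ S) ∩ Adom i)) := by
      rw [Set.inter_comm]
      exact ((hiso i).2.2.2.2.2 _ Set.inter_subset_right (hE0m.inter (hiso i).1)).symm
    rw [h1]
    calc μ (f i '' ((A \ S) ∩ Adom i)) ≤ μ (f i '' (U i ∪ V i)) :=
          measure_mono (Set.image_mono (hcover i))
      _ = μ (f i '' U i ∪ f i '' V i) := by rw [Set.image_union]
      _ ≤ μ (f i '' U i) + μ (f i '' V i) := measure_union_le _ _
  -- row sum
  have hrowsum : ∑ i : Fin m, μ (Adom i ∩ (A \ S)) = n * μ (A \ S) :=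
    keycount μ m n Adom (fun i => (hiso i).1) hrow _ hE0m
  -- V sum
  have hVsum : ∑ i : Fin m, μ (f i '' V i) ≤ n * μ B + n * μ S := by
    calc ∑ i : Fin m, μ (f i '' V i)
        ≤ ∑ i : Fin m, μ (f i '' Adom i ∩ (B ∪ T)) := by
          refine Finset.sum_le_sum fun i _ => measure_mono ?_
          rintro y ⟨x, hxV, rfl⟩
          exact ⟨⟨x, hxV.1.2, rfl⟩, hxV.2⟩
      _ = n * μ (B ∪ T) :=
          keycount μ m n (fun i => f i '' Adom i) (fun i => (hiso i).2.2.2.1) hcol _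
            (hB.union hTmeas)
      _ ≤ n * (μ B + μ T) := mul_le_mul_right (measure_union_le _ _) _
      _ = n * μ B + n * μ S := by rw [hμT, mul_add]
  -- U sum : the crucial (n-1) bound
  have hUsum : ∑ i : Fin m, μ (f i '' U i) ≤ ((n : ℝ≥0∞) - 1) * μ C := by
    have hsubD : ∀ i, f i '' U i ⊆ D := by
      rintro i y ⟨x, hxU, rfl⟩
      exact hxU.2
    have h1 : ∀ i : Fin m, μ (f i '' U i) =
        ∫⁻ y, (f i '' U i).indicator (fun _ => (1:ℝ≥0∞)) y ∂(μ.restrict D) := by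
      intro i
      rw [lintegral_indicator (hUim i), setLIntegral_one, Measure.restrict_apply (hUim i),
        Set.inter_eq_self_of_subset_left (hsubD i)]
    rw [Finset.sum_congr rfl (fun i _ => h1 i), ← lintegral_finset_sum _
      (fun i _ => measurable_const.indicator (hUim i))]
    have hbd : ∀ᵐ y ∂(μ.restrict D),
        ∑ i : Fin m, (f i '' U i).indicator (fun _ => (1:ℝ≥0∞)) y ≤ (n : ℝ≥0∞) - 1 := by
      filter_upwards [ae_restrict_of_ae hcol, ae_restrict_mem hDmeas] with y hy hyD
      obtain ⟨c, hcC, hcy⟩ := hyD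
      obtain ⟨i₀, hci₀, hfci₀⟩ := hθH c hcC
      have hab : ∀ i : Fin m, (f i '' U i).indicator (fun _ => (1:ℝ≥0∞)) y ≤
          (f i '' Adom i).indicator (fun _ => (1:ℝ≥0∞)) y := by
        intro i
        apply Set.indicator_le_indicator_of_subset
        · exact Set.image_mono (Set.inter_subset_left.trans Set.inter_subset_right)
        · exact fun _ => by simp
      have ha0 : (f i₀ '' U i₀).indicator (fun _ => (1:ℝ≥0∞)) y = 0 := by
        apply Set.indicator_of_notMem
        rintro ⟨x, hxU, hxy⟩
        have hxc : x = c := (hiso i₀).2.2.1 hxU.1.2 hci₀ (by rw [hxy, hfci₀, hcy])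
        have : c ∈ A ∩ C := ⟨hxc ▸ hxU.1.1.1, hcC⟩
        rw [hAC] at this
        exact this
      have hb1 : (1:ℝ≥0∞) ≤ (f i₀ '' Adom i₀).indicator (fun _ => (1:ℝ≥0∞)) y := by
        have hmem : y ∈ f i₀ '' Adom i₀ := ⟨c, hci₀, by rw [hfci₀, hcy]⟩
        rw [Set.indicator_of_mem hmem]
      refine ENNReal.le_sub_of_add_le_right ENNReal.one_ne_top ?_
      calc (∑ i : Fin m, (f i '' U i).indicator (fun _ => (1:ℝ≥0∞)) y) + 1
          = (∑ i ∈ Finset.univ.erase i₀, (f i '' U i).indicator (fun _ => (1:ℝ≥0∞)) y) + 1 := by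
            rw [← Finset.sum_erase_add _ _ (Finset.mem_univ i₀), ha0, add_zero]
        _ ≤ (∑ i ∈ Finset.univ.erase i₀,
              (f i '' Adom i).indicator (fun _ => (1:ℝ≥0∞)) y) +
              (f i₀ '' Adom i₀).indicator (fun _ => (1:ℝ≥0∞)) y :=
            add_le_add (Finset.sum_le_sum fun i _ => hab i) hb1
        _ = ∑ i : Fin m, (f i '' Adom i).indicator (fun _ => (1:ℝ≥0∞)) y :=
            Finset.sum_erase_add _ _ (Finset.mem_univ i₀)
        _ = (n : ℝ≥0∞) := hy
    calc ∫⁻ y, ∑ i : Fin m, (f i '' U i).indicator (fun _ => (1:ℝ≥0∞)) y ∂(μ.restrict D)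
        ≤ ∫⁻ _, ((n : ℝ≥0∞) - 1) ∂(μ.restrict D) := lintegral_mono_ae hbd
      _ = ((n : ℝ≥0∞) - 1) * μ D := by rw [lintegral_const, Measure.restrict_apply_univ]
      _ = ((n : ℝ≥0∞) - 1) * μ C := by rw [hμD]
  -- combine
  have hcomb : (n : ℝ≥0∞) * μ A ≤ ((n : ℝ≥0∞) - 1) * μ C + (n : ℝ≥0∞) * μ B
      + 2 * (n : ℝ≥0∞) * μ S := by
    have h1 : (n : ℝ≥0∞) * μ (A \ S) ≤ ((n : ℝ≥0∞) - 1) * μ C + (n : ℝ≥0∞) * μ B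
        + (n : ℝ≥0∞) * μ S := by
      calc (n : ℝ≥0∞) * μ (A \ S) = ∑ i : Fin m, μ (Adom i ∩ (A \ S)) := hrowsum.symm
        _ ≤ ∑ i : Fin m, (μ (f i '' U i) + μ (f i '' V i)) :=
            Finset.sum_le_sum fun i _ => hmain i
        _ = (∑ i : Fin m, μ (f i '' U i)) + ∑ i : Fin m, μ (f i '' V i) :=
            Finset.sum_add_distrib
        _ ≤ ((n : ℝ≥0∞) - 1) * μ C + (n * μ B + n * μ S) := add_le_add hUsum hVsum
        _ = ((n : ℝ≥0∞) - 1) * μ C + (n : ℝ≥0∞) * μ B + (n : ℝ≥0∞) * μ S := by ring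
    have h2 : μ A ≤ μ (A \ S) + μ S := by
      have hsub : A ⊆ (A \ S) ∪ S := by
        intro x hx
        by_cases h : x ∈ S
        · exact Or.inr h
        · exact Or.inl ⟨hx, h⟩
      exact (measure_mono hsub).trans (measure_union_le _ _)
    calc (n : ℝ≥0∞) * μ A ≤ (n : ℝ≥0∞) * (μ (A \ S) + μ S) := mul_le_mul_right h2 _
      _ = (n : ℝ≥0∞) * μ (A \ S) + (n : ℝ≥0∞) * μ S := mul_add _ _ _
      _ ≤ (((n : ℝ≥0∞) - 1) * μ C + (n : ℝ≥0∞) * μ B + (n : ℝ≥0∞) * μ S)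
            + (n : ℝ≥0∞) * μ S := add_le_add_left h1 _
      _ = ((n : ℝ≥0∞) - 1) * μ C + (n : ℝ≥0∞) * μ B + 2 * (n : ℝ≥0∞) * μ S := by ring
  refine ⟨S, θ₁, ⟨hSmeas, hθ₁meas, hθ₁inj, by rw [himS]; exact hTmeas, hgraph, hpres⟩,
    hθ₁H, hSsubA, hTsub, ?_⟩
  exact endgame_ineq n hn (μ A) (μ B) (μ C) (μ S) hcomb
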